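/- arXiv:0709.2282 — 3 statements merged into one kernel-verified Lean document; each statement's English description precedes it below -/
import Mathlib

section
/- If ζ ∈ ℂ³ is nonzero and satisfies ζ·ζ = 0, then the 4×4 matrix P₀(ζ) has rank 2, and consequently ker P₀(ζ) = im P₀(ζ). -/
open Matrix

noncomputable def σ1 : Matrix (Fin 2) (Fin 2) ℂ := !![0, 1; 1, 0]
noncomputable def σ2 : Matrix (Fin 2) (Fin 2) ℂ := !![0, -Complex.I; Complex.I, 0]
noncomputable def σ3 : Matrix (Fin 2) (Fin 2) ℂ := !![1, 0; 0, -1]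

/-- Pauli contraction σ·a = a₁σ₁ + a₂σ₂ + a₃σ₃. -/
noncomputable def sdot (a : Fin 3 → ℂ) : Matrix (Fin 2) (Fin 2) ℂ :=
  a 0 • σ1 + a 1 • σ2 + a 2 • σ3

/-- The 4×4 Pauli Dirac symbol P₀(a) = [[0, σ·a],[σ·a, 0]]. -/
noncomputable def P0 (a : Fin 3 → ℂ) : Matrix (Fin 2 ⊕ Fin 2) (Fin 2 ⊕ Fin 2) ℂ :=
  Matrix.fromBlocks 0 (sdot a) (sdot a) 0

/-- Bilinear dot product on ℂ³ (no conjugation). -/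
noncomputable def cdot {n : ℕ} (a b : Fin n → ℂ) : ℂ := ∑ i, a i * b i

/-- Block diagonal matrix diag(qp I₂, qm I₂). -/
noncomputable def Qmat (qp qm : ℂ) : Matrix (Fin 2 ⊕ Fin 2) (Fin 2 ⊕ Fin 2) ℂ :=
  Matrix.fromBlocks (qp • 1) 0 0 (qm • 1)

lemma sdot_sq (ζ : Fin 3 → ℂ) (hζ : cdot ζ ζ = 0) : sdot ζ * sdot ζ = 0 := by
  have h : ζ 0 * ζ 0 + ζ 1 * ζ 1 + ζ 2 * ζ 2 = 0 := by
    simpa [cdot, Fin.sum_univ_three] using hζ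
  ext i j
  fin_cases i <;> fin_cases j <;>
    simp [sdot, σ1, σ2, σ3, Matrix.mul_apply, Fin.sum_univ_two] <;>
    ring_nf <;> simp only [Complex.I_sq] <;> linear_combination h

/-- If ζ ≠ 0 and ζ·ζ = 0, then P₀(ζ) has rank 2 and ker P₀(ζ) = im P₀(ζ). -/
theorem pauliDirac_rank_two (ζ : Fin 3 → ℂ) (hζ0 : ζ ≠ 0) (hζ : cdot ζ ζ = 0) :
    (P0 ζ).rank = 2 ∧
    LinearMap.ker (P0 ζ).mulVecLin = LinearMap.range (P0 ζ).mulVecLin := by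
  have hS2 : sdot ζ * sdot ζ = 0 := sdot_sq ζ hζ
  have hP2 : P0 ζ * P0 ζ = 0 := by
    simp [P0, Matrix.fromBlocks_multiply, hS2]
  -- range ⊆ ker
  have hrk : LinearMap.range (P0 ζ).mulVecLin ≤ LinearMap.ker (P0 ζ).mulVecLin := by
    rintro x ⟨v, rfl⟩
    simp only [LinearMap.mem_ker, Matrix.mulVecLin_apply]
    rw [Matrix.mulVec_mulVec, hP2, Matrix.zero_mulVec]
  -- nonzero entry of sdot ζ
  obtain ⟨i0, j, hij⟩ : ∃ i j, sdot ζ i j ≠ 0 := by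
    by_contra hcon
    push_neg at hcon
    apply hζ0
    have e00 : ζ 2 = 0 := by simpa [sdot, σ1, σ2, σ3] using hcon 0 0
    have e01 : ζ 0 - Complex.I * ζ 1 = 0 := by
      have := hcon 0 1; simp [sdot, σ1, σ2, σ3] at this; linear_combination this
    have e10 : ζ 0 + Complex.I * ζ 1 = 0 := by
      have := hcon 1 0; simp [sdot, σ1, σ2, σ3] at this; linear_combination this
    have h0 : ζ 0 = 0 := by linear_combination (e01 + e10) / 2
    have h1 : ζ 1 = 0 := by
      have hI : Complex.I * (2 * ζ 1) = 0 := by linear_combination e10 - e01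
      have := mul_eq_zero.mp hI
      rcases this with h | h
      · exact absurd h Complex.I_ne_zero
      · linear_combination h / 2
    funext i
    fin_cases i <;> simpa using by first | exact h0 | exact h1 | exact e00
  set c : Fin 2 → ℂ := fun i => sdot ζ i j with hc
  set x : (Fin 2 ⊕ Fin 2) → ℂ := Sum.elim 0 c with hxdef
  set y : (Fin 2 ⊕ Fin 2) → ℂ := Sum.elim c 0 with hydef
  have hx : (P0 ζ).mulVecLin (Pi.single (Sum.inl j) 1) = x := by
    funext k
    cases k <;> simp [P0, Matrix.mulVecLin_apply, Matrix.mulVec_single, hxdef, hc]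
  have hy : (P0 ζ).mulVecLin (Pi.single (Sum.inr j) 1) = y := by
    funext k
    cases k <;> simp [P0, Matrix.mulVecLin_apply, Matrix.mulVec_single, hydef, hc]
  have hli : LinearIndependent ℂ ![x, y] := by
    rw [LinearIndependent.pair_iff]
    intro s t hst
    have h1 : s * c i0 = 0 := by
      have := congrFun hst (Sum.inr i0)
      simpa [hxdef, hydef] using this
    have h2 : t * c i0 = 0 := by
      have := congrFun hst (Sum.inl i0)
      simpa [hxdef, hydef] using this
    have hc0 : c i0 ≠ 0 := hij
    exact ⟨by rcases mul_eq_zero.mp h1 with h | h; exact h; exact absurd h hc0,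
           by rcases mul_eq_zero.mp h2 with h | h; exact h; exact absurd h hc0⟩
  have hspan : Submodule.span ℂ (Set.range ![x, y]) ≤ LinearMap.range (P0 ζ).mulVecLin := by
    rw [Submodule.span_le]
    rintro z hz
    simp only [Set.mem_range] at hz
    obtain ⟨i, rfl⟩ := hz
    fin_cases i
    · exact ⟨Pi.single (Sum.inl j) 1, hx⟩
    · exact ⟨Pi.single (Sum.inr j) 1, hy⟩
  have hfin : Module.finrank ℂ ((Fin 2 ⊕ Fin 2) → ℂ) = 4 := by
    simp [Module.finrank_pi]
  have hrn : Module.finrank ℂ (LinearMap.range (P0 ζ).mulVecLin)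
      + Module.finrank ℂ (LinearMap.ker (P0 ζ).mulVecLin) = 4 := by
    rw [LinearMap.finrank_range_add_finrank_ker, hfin]
  have hge : 2 ≤ Module.finrank ℂ (LinearMap.range (P0 ζ).mulVecLin) := by
    have := Submodule.finrank_mono hspan
    rwa [finrank_span_eq_card hli, Fintype.card_fin] at this
  have hle2 : Module.finrank ℂ (LinearMap.range (P0 ζ).mulVecLin)
      ≤ Module.finrank ℂ (LinearMap.ker (P0 ζ).mulVecLin) := Submodule.finrank_mono hrk
  have hrank : Module.finrank ℂ (LinearMap.range (P0 ζ).mulVecLin) = 2 := by omega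
  have hker : Module.finrank ℂ (LinearMap.ker (P0 ζ).mulVecLin) = 2 := by omega
  refine ⟨hrank, ?_⟩
  exact (Submodule.eq_of_le_of_finrank_le hrk (by omega)).symm
end

section
/- Let ζ = t + iν with t, ν ∈ ℝ³ orthogonal unit vectors, so ζ·ζ = 0 and |ζ|² = 2. For any A ∈ ℝ³ with A·ν = 0 and any Q = diag(q₊I₂, q₋I₂) with q₊, q₋ ∈ ℂ: if P₀(ζ̄)(P₀(A)+Q)P₀(ζ) = 0 and P₀(ζ)(P₀(A)+Q)P₀(ζ̄) = 0, then −P₀(A) + (A·t)P₀(t) + Q_I = 0. -/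
open Matrix

lemma P0_smul (c : ℂ) (f : Fin 3 → ℂ) : P0 (fun i => c * f i) = c • P0 f := by
  have hs : sdot (fun i => c * f i) = c • sdot f := by
    simp only [sdot, smul_add, smul_smul]
  ext i j
  rcases i with i | i <;> rcases j with j | j <;>
    simp [P0, hs, Matrix.fromBlocks_apply₁₁, Matrix.fromBlocks_apply₁₂,
      Matrix.fromBlocks_apply₂₁, Matrix.fromBlocks_apply₂₂]

lemma Qmat_zero : Qmat 0 0 = 0 := by
  ext i j
  rcases i with i | i <;> rcases j with j | j <;> simp [Qmat]

/-- Algebraic core of boundary determination: with ζ = t + iν for orthonormal t, ν and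
A·ν = 0, the two sandwich identities imply −P₀(A) + (A·t)P₀(t) + Q_I = 0. -/
theorem boundary_determination_core (t ν : Fin 3 → ℝ)
    (ht : ∑ i, t i ^ 2 = 1) (hν : ∑ i, ν i ^ 2 = 1) (htν : ∑ i, t i * ν i = 0)
    (A : Fin 3 → ℝ) (hAν : ∑ i, A i * ν i = 0) (qp qm : ℂ)
    (h1 : P0 (fun i => (t i : ℂ) - Complex.I * ν i) *
            (P0 (fun i => (A i : ℂ)) + Qmat qp qm) *
            P0 (fun i => (t i : ℂ) + Complex.I * ν i) = 0)
    (h2 : P0 (fun i => (t i : ℂ) + Complex.I * ν i) *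
            (P0 (fun i => (A i : ℂ)) + Qmat qp qm) *
            P0 (fun i => (t i : ℂ) - Complex.I * ν i) = 0) :
    -P0 (fun i => (A i : ℂ)) + ((∑ i, A i * t i : ℝ) : ℂ) • P0 (fun i => (t i : ℂ))
      + Qmat qm qp = 0 := by
  rw [Fin.sum_univ_three] at ht hν htν hAν
  have htc : (t 0 : ℂ)^2 + (t 1 : ℂ)^2 + (t 2 : ℂ)^2 = 1 := by exact_mod_cast ht
  have hνc : (ν 0 : ℂ)^2 + (ν 1 : ℂ)^2 + (ν 2 : ℂ)^2 = 1 := by exact_mod_cast hν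
  have a1 := congrFun (congrFun h1 (Sum.inl 0)) (Sum.inl 0)
  have a2 := congrFun (congrFun h1 (Sum.inl 1)) (Sum.inl 1)
  have b1 := congrFun (congrFun h1 (Sum.inr 0)) (Sum.inr 0)
  have b2 := congrFun (congrFun h1 (Sum.inr 1)) (Sum.inr 1)
  have c1 := congrFun (congrFun h1 (Sum.inl 0)) (Sum.inr 0)
  have c2 := congrFun (congrFun h1 (Sum.inl 1)) (Sum.inr 1)
  simp only [Matrix.mul_apply, Fintype.sum_sum_type, Fin.sum_univ_two, P0, Qmat, sdot,
    Matrix.fromBlocks_apply₁₁, Matrix.fromBlocks_apply₁₂, Matrix.fromBlocks_apply₂₁,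
    Matrix.fromBlocks_apply₂₂, Matrix.add_apply, Matrix.smul_apply, Matrix.zero_apply,
    Matrix.one_apply, σ1, σ2, σ3, smul_eq_mul, Matrix.of_apply] at a1 a2 b1 b2 c1 c2
  norm_num at a1 a2 b1 b2 c1 c2
  have hqm : qm = 0 := by
    linear_combination (a1 + a2)/4 - (qm/2)*htc - (qm/2)*hνc +
      ((-1/2)*Complex.I^2*(ν 1:ℂ)^2*qm + (1/2)*(ν 0:ℂ)^2*qm + (1/2)*(ν 1:ℂ)^2*qm +
        (1/2)*(ν 2:ℂ)^2*qm + (1/2)*qm*(t 1:ℂ)^2) * Complex.I_sq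
  have hqp : qp = 0 := by
    linear_combination (b1 + b2)/4 - (qp/2)*htc - (qp/2)*hνc +
      ((-1/2)*Complex.I^2*(ν 1:ℂ)^2*qp + (1/2)*(ν 0:ℂ)^2*qp + (1/2)*(ν 1:ℂ)^2*qp +
        (1/2)*(ν 2:ℂ)^2*qp + (1/2)*qp*(t 1:ℂ)^2) * Complex.I_sq
  have hβc : (A 0:ℂ)*((t 1:ℂ)*(ν 2:ℂ) - (t 2:ℂ)*(ν 1:ℂ)) +
      (A 1:ℂ)*((t 2:ℂ)*(ν 0:ℂ) - (t 0:ℂ)*(ν 2:ℂ)) +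
      (A 2:ℂ)*((t 0:ℂ)*(ν 1:ℂ) - (t 1:ℂ)*(ν 0:ℂ)) = 0 := by
    linear_combination (c1 + c2)/4 +
      ((-1)*(A 0:ℂ)*(ν 1:ℂ)*(t 2:ℂ) + (A 0:ℂ)*(ν 2:ℂ)*(t 1:ℂ) + (A 1:ℂ)*(ν 0:ℂ)*(t 2:ℂ) +
        (-1)*(A 1:ℂ)*(ν 2:ℂ)*(t 0:ℂ) + (-1)*(A 2:ℂ)*(ν 0:ℂ)*(t 1:ℂ) +
        (A 2:ℂ)*(ν 1:ℂ)*(t 0:ℂ)) * Complex.I_sq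
  have hβ : A 0*(t 1*ν 2 - t 2*ν 1) + A 1*(t 2*ν 0 - t 0*ν 2) + A 2*(t 0*ν 1 - t 1*ν 0) = 0 := by
    exact_mod_cast hβc
  have hA0 : A 0 = (A 0*t 0 + A 1*t 1 + A 2*t 2) * t 0 := by
    linear_combination (-(A 0)*(ν 0^2+ν 1^2+ν 2^2))*ht +
        (-(A 0) + (A 0*t 0+A 1*t 1+A 2*t 2)*t 0)*hν +
        (A 0*(t 0*ν 0+t 1*ν 1+t 2*ν 2) - (A 0*t 0+A 1*t 1+A 2*t 2)*ν 0)*htν +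
        ((t 0^2+t 1^2+t 2^2)*ν 0 - (t 0*ν 0+t 1*ν 1+t 2*ν 2)*t 0)*hAν +
        (t 1*ν 2 - t 2*ν 1)*hβ
  have hA1 : A 1 = (A 0*t 0 + A 1*t 1 + A 2*t 2) * t 1 := by
    linear_combination (-(A 1)*(ν 0^2+ν 1^2+ν 2^2))*ht +
        (-(A 1) + (A 0*t 0+A 1*t 1+A 2*t 2)*t 1)*hν +
        (A 1*(t 0*ν 0+t 1*ν 1+t 2*ν 2) - (A 0*t 0+A 1*t 1+A 2*t 2)*ν 1)*htν +
        ((t 0^2+t 1^2+t 2^2)*ν 1 - (t 0*ν 0+t 1*ν 1+t 2*ν 2)*t 1)*hAν +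
        (t 2*ν 0 - t 0*ν 2)*hβ
  have hA2 : A 2 = (A 0*t 0 + A 1*t 1 + A 2*t 2) * t 2 := by
    linear_combination (-(A 2)*(ν 0^2+ν 1^2+ν 2^2))*ht +
        (-(A 2) + (A 0*t 0+A 1*t 1+A 2*t 2)*t 2)*hν +
        (A 2*(t 0*ν 0+t 1*ν 1+t 2*ν 2) - (A 0*t 0+A 1*t 1+A 2*t 2)*ν 2)*htν +
        ((t 0^2+t 1^2+t 2^2)*ν 2 - (t 0*ν 0+t 1*ν 1+t 2*ν 2)*t 2)*hAν +
        (t 0*ν 1 - t 1*ν 0)*hβ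
  have hAt : (fun i => (A i : ℂ)) =
      fun i => ((A 0*t 0 + A 1*t 1 + A 2*t 2 : ℝ) : ℂ) * (t i : ℂ) := by
    have h0 : (A 0 : ℂ) = ((A 0*t 0 + A 1*t 1 + A 2*t 2 : ℝ) : ℂ) * (t 0 : ℂ) := by
      exact_mod_cast congrArg Complex.ofReal hA0
    have h1' : (A 1 : ℂ) = ((A 0*t 0 + A 1*t 1 + A 2*t 2 : ℝ) : ℂ) * (t 1 : ℂ) := by
      exact_mod_cast congrArg Complex.ofReal hA1
    have h2' : (A 2 : ℂ) = ((A 0*t 0 + A 1*t 1 + A 2*t 2 : ℝ) : ℂ) * (t 2 : ℂ) := by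
      exact_mod_cast congrArg Complex.ofReal hA2
    funext i
    fin_cases i
    · exact h0
    · exact h1'
    · exact h2'
  rw [Fin.sum_univ_three, hqm, hqp, Qmat_zero, hAt, P0_smul]
  push_cast
  abel
end

section
/- Let t, ν ∈ ℝ³ be orthogonal unit vectors, A ∈ ℝ³ with A·ν = 0, and q₊, q₋ ∈ ℂ. If for every unit vector t̂ in the plane orthogonal to ν the identity −P₀(A) + (A·t̂)P₀(t̂) + Q_I = 0 holds (with Q = diag(q₊I₂,q₋I₂), Q_I = diag(q₋I₂,q₊I₂)), then A = 0 and q₊ = q₋ = 0. -/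
open Matrix

theorem key' (a b : Fin 3 → ℂ) (c qp qm : ℂ)
    (e : -P0 a + c • P0 b + Qmat qm qp = 0) :
    qm = 0 ∧ qp = 0 ∧ a 0 = c * b 0 ∧ a 1 = c * b 1 ∧ a 2 = c * b 2 := by
  have h00 := congrFun (congrFun e (Sum.inl 0)) (Sum.inl 0)
  have h11 := congrFun (congrFun e (Sum.inr 0)) (Sum.inr 0)
  have e00 := congrFun (congrFun e (Sum.inl 0)) (Sum.inr 0)
  have e01 := congrFun (congrFun e (Sum.inl 0)) (Sum.inr 1)
  have e10 := congrFun (congrFun e (Sum.inl 1)) (Sum.inr 0)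
  simp [P0, Qmat, sdot, σ1, σ2, σ3, Matrix.add_apply, Matrix.smul_apply, Matrix.neg_apply,
    Matrix.fromBlocks] at h00 h11 e00 e01 e10
  refine ⟨h00, h11, ?_, ?_, ?_⟩
  · linear_combination (-(e01 + e10)) / 2
  · have hI : (a 1 - c * b 1) * Complex.I = 0 := by linear_combination (e01 - e10) / 2
    rcases mul_eq_zero.mp hI with hz | hz
    · exact sub_eq_zero.mp hz
    · exact absurd hz Complex.I_ne_zero
  · linear_combination -e00

/-- If −P₀(A) + (A·t̂)P₀(t̂) + Q_I = 0 holds for every unit vector t̂ orthogonal to ν,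
where A·ν = 0, then A = 0 and q₊ = q₋ = 0. -/
theorem boundary_determination_conclusion (t ν : Fin 3 → ℝ)
    (ht : ∑ i, t i ^ 2 = 1) (hν : ∑ i, ν i ^ 2 = 1) (htν : ∑ i, t i * ν i = 0)
    (A : Fin 3 → ℝ) (hAν : ∑ i, A i * ν i = 0) (qp qm : ℂ)
    (h : ∀ th : Fin 3 → ℝ, (∑ i, th i ^ 2 = 1) → (∑ i, th i * ν i = 0) →
      -P0 (fun i => (A i : ℂ)) + ((∑ i, A i * th i : ℝ) : ℂ) • P0 (fun i => (th i : ℂ))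
        + Qmat qm qp = 0) :
    A = 0 ∧ qp = 0 ∧ qm = 0 := by
  -- cross product s = t × ν
  set s : Fin 3 → ℝ := fun i =>
    ![t 1 * ν 2 - t 2 * ν 1, t 2 * ν 0 - t 0 * ν 2, t 0 * ν 1 - t 1 * ν 0] i with hs_def
  simp only [Fin.sum_univ_three] at ht hν htν hAν
  have hs : ∑ i, s i ^ 2 = 1 := by
    simp only [Fin.sum_univ_three, hs_def]
    simp only [Matrix.cons_val_zero, Matrix.cons_val_one, Matrix.head_cons,
      Matrix.cons_val_two, Matrix.tail_cons]
    nlinarith [ht, hν, htν]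
  have hsν : ∑ i, s i * ν i = 0 := by
    simp only [Fin.sum_univ_three, hs_def]
    simp only [Matrix.cons_val_zero, Matrix.cons_val_one, Matrix.head_cons,
      Matrix.cons_val_two, Matrix.tail_cons]
    ring
  have Kt := key' _ _ _ _ _ (h t (by simp [Fin.sum_univ_three, ht]) (by simp [Fin.sum_univ_three, htν]))
  have Ks := key' _ _ _ _ _ (h s hs hsν)
  obtain ⟨hqp, hqm, t0, t1, t2⟩ := Kt
  obtain ⟨-, -, s0, s1, s2⟩ := Ks
  refine ⟨?_, hqm, hqp⟩
  -- Now A = c t and A = d s with c = A·t, d = A·s real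
  simp only [Fin.sum_univ_three] at t0 t1 t2 s0 s1 s2
  -- convert complex equations to real ones
  have rt0 : A 0 = (A 0 * t 0 + A 1 * t 1 + A 2 * t 2) * t 0 := by
    exact_mod_cast t0
  have rt1 : A 1 = (A 0 * t 0 + A 1 * t 1 + A 2 * t 2) * t 1 := by exact_mod_cast t1
  have rt2 : A 2 = (A 0 * t 0 + A 1 * t 1 + A 2 * t 2) * t 2 := by exact_mod_cast t2
  have rs0 : A 0 = (A 0 * s 0 + A 1 * s 1 + A 2 * s 2) * s 0 := by exact_mod_cast s0
  have rs1 : A 1 = (A 0 * s 0 + A 1 * s 1 + A 2 * s 2) * s 1 := by exact_mod_cast s1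
  have rs2 : A 2 = (A 0 * s 0 + A 1 * s 1 + A 2 * s 2) * s 2 := by exact_mod_cast s2
  have hst : s 0 * t 0 + s 1 * t 1 + s 2 * t 2 = 0 := by
    simp only [hs_def, Matrix.cons_val_zero, Matrix.cons_val_one, Matrix.head_cons,
      Matrix.cons_val_two, Matrix.tail_cons]
    ring
  -- A·t = (A·s)(s·t) = 0
  have hAt : A 0 * t 0 + A 1 * t 1 + A 2 * t 2 = 0 := by
    have h2 : A 0 * t 0 + A 1 * t 1 + A 2 * t 2
        = (A 0 * s 0 + A 1 * s 1 + A 2 * s 2) * (s 0 * t 0 + s 1 * t 1 + s 2 * t 2) := by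
      linear_combination rs0 * t 0 + rs1 * t 1 + rs2 * t 2
    rw [h2, hst, mul_zero]
  funext i
  fin_cases i
  · show A 0 = 0; rw [rt0, hAt, zero_mul]
  · show A 1 = 0; rw [rt1, hAt, zero_mul]
  · show A 2 = 0; rw [rt2, hAt, zero_mul]
end
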